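/- Let R be a Noetherian ring, let I ⊆ R be an ideal, and let f ∈ R be an element that is a non-zerodivisor on R/I^t for all t ≤ s. Then Ass R/(I,f)^t ⊆ Ass R/(I,f)^{t+1} for all t < s. -/

import Mathlib

/-- **Corollary (associated primes of powers modulo a non-zerodivisor).** Let `R` be a
Noetherian ring, `I ⊆ R` an ideal and `f ∈ R` an element which is a non-zerodivisor on
`R/I^t` for all `t ≤ s`. Then `Ass R/(I,f)^t ⊆ Ass R/(I,f)^(t+1)` for all `t < s`. -/
theorem ass_powers_monotone_modulo_nonzerodivisor {R : Type*} [CommRing R]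
    [IsNoetherianRing R] (I : Ideal R) (f : R) (s : ℕ)
    (hnzd : ∀ t : ℕ, t ≤ s → ∀ g : R, f * g ∈ I ^ t → g ∈ I ^ t) :
    ∀ t : ℕ, t < s →
      associatedPrimes R (R ⧸ (I + Ideal.span {f}) ^ t) ⊆
        associatedPrimes R (R ⧸ (I + Ideal.span {f}) ^ (t + 1)) := by
  intro t ht
  set J : Ideal R := I + Ideal.span {f} with hJ
  have hfJ : f ∈ J := by
    exact Ideal.mem_sup_right (Ideal.mem_span_singleton_self f)
  have hIJ : I ≤ J := le_sup_left
  -- key decomposition : J^(n+1) ≤ I^(n+1) + (f) * J^n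
  have key : ∀ n : ℕ, J ^ (n + 1) ≤ I ^ (n + 1) + Ideal.span {f} * J ^ n := by
    intro n
    induction n with
    | zero => simp [hJ]
    | succ n ih =>
      have h1 : J ^ (n + 2) = J ^ (n + 1) * J := pow_succ J (n + 1)
      rw [h1]
      calc J ^ (n + 1) * J ≤ (I ^ (n + 1) + Ideal.span {f} * J ^ n) * J :=
            Ideal.mul_mono_left ih
        _ = I ^ (n + 1) * J + Ideal.span {f} * J ^ n * J := by
            rw [add_mul]
        _ ≤ I ^ (n + 2) + Ideal.span {f} * J ^ (n + 1) := by
            apply sup_le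
            · -- I^(n+1) * J = I^(n+1)*I + I^(n+1)*span{f} ≤ I^(n+2) + span{f}*J^(n+1)
              have h2 : I ^ (n + 1) * J = I ^ (n + 1) * I + I ^ (n + 1) * Ideal.span {f} := by
                rw [hJ, mul_add]
              rw [h2]
              apply sup_le
              · rw [← pow_succ]
                exact le_sup_left
              · rw [mul_comm]
                exact le_sup_of_le_right
                  (Ideal.mul_mono_right (pow_le_pow_left' hIJ (n + 1)))
            · rw [mul_assoc, ← pow_succ]
              exact le_sup_right
  -- key cancellation
  have cancel : ∀ g : R, f * g ∈ J ^ (t + 1) → g ∈ J ^ t := by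
    intro g hg
    have := key t hg
    rw [Submodule.add_eq_sup, Submodule.mem_sup] at this
    obtain ⟨a, ha, x, hx, hax⟩ := this
    rw [Ideal.mem_span_singleton_mul] at hx
    obtain ⟨h, hh, rfl⟩ := hx
    have hfa : f * (g - h) ∈ I ^ (t + 1) := by
      have : f * (g - h) = a := by linear_combination -hax
      rw [this]; exact ha
    have hgh : g - h ∈ I ^ (t + 1) := hnzd (t + 1) ht (g - h) hfa
    have hgh' : g - h ∈ J ^ t := by
      have : I ^ (t + 1) ≤ J ^ t :=
        le_trans (pow_le_pow_left' hIJ (t + 1)) (Ideal.pow_le_pow_right (Nat.le_succ t))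
      exact this hgh
    have := add_mem hgh' hh
    simpa using this
  -- multiplication by f map
  have hmap : J ^ t ≤ Submodule.comap (f • (LinearMap.id : R →ₗ[R] R)) (J ^ (t + 1)) := by
    intro x hx
    show (f • (LinearMap.id : R →ₗ[R] R)) x ∈ J ^ (t + 1)
    simp only [LinearMap.smul_apply, LinearMap.id_apply, smul_eq_mul]
    rw [pow_succ, mul_comm]
    exact Ideal.mul_mem_mul hfJ hx
  set φ : (R ⧸ J ^ t) →ₗ[R] (R ⧸ J ^ (t + 1)) :=
    Submodule.mapQ (J ^ t) (J ^ (t + 1)) (f • LinearMap.id) hmap with hφ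
  have hinj : Function.Injective φ := by
    rw [← LinearMap.ker_eq_bot, eq_bot_iff]
    rintro x hx
    obtain ⟨y, rfl⟩ := Submodule.Quotient.mk_surjective _ x
    simp only [LinearMap.mem_ker, hφ, Submodule.mapQ_apply, LinearMap.smul_apply,
      LinearMap.id_apply, smul_eq_mul] at hx
    rw [Submodule.Quotient.mk_eq_zero] at hx
    rw [Submodule.mem_bot, Submodule.Quotient.mk_eq_zero]
    exact cancel y hx
  exact associatedPrimes.subset_of_injective hinj
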